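/- arXiv:1709.04804 — 5 statements merged into one kernel-verified Lean document; each statement's English description precedes it below -/
import Mathlib

section
/- (Entropy dissipation inequality from interface entropy stability, Lemma on Γ − G.) Suppose η : Ω → ℝ is C² with Hessian eigenvalues ≥ η̲ > 0 on convex Ω ⊆ ℝ^N, and suppose that for all ν ≤ 1/L_g the state 𝒰 = u_K − ν(g − f) ∈ Ω satisfies η(𝒰) − η(u_K) + ν(G − F) ≤ 0, where g, f ∈ ℝ^N and G, F ∈ ℝ are fixed. Define Γ = F + ⟪∇η(u_K), g − f⟫. Then for every ν ∈ (0, 1/L_g], Γ − G ≥ (ν η̲ / 2)‖g − f‖². -/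
open RealInnerProductSpace

theorem stmt_6 {N : ℕ} (Ω : Set (EuclideanSpace ℝ (Fin N))) (hΩ : Convex ℝ Ω)
    (η : EuclideanSpace ℝ (Fin N) → ℝ) (ηl : ℝ) (hηl : 0 < ηl)
    (hC2 : ContDiff ℝ 2 η)
    (hHess : ∀ w ∈ Ω, ∀ x : EuclideanSpace ℝ (Fin N),
      ηl * ‖x‖ ^ 2 ≤ ⟪fderiv ℝ (gradient η) w x, x⟫)
    (Lg : ℝ) (hLg : 0 < Lg)
    (uK gv fv : EuclideanSpace ℝ (Fin N)) (G F : ℝ)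
    (hmem : ∀ ν : ℝ, 0 ≤ ν → ν ≤ 1 / Lg → uK - ν • (gv - fv) ∈ Ω)
    (hent : ∀ ν : ℝ, 0 ≤ ν → ν ≤ 1 / Lg →
      η (uK - ν • (gv - fv)) - η uK + ν * (G - F) ≤ 0)
    (Γ : ℝ) (hΓ : Γ = F + ⟪gradient η uK, gv - fv⟫) :
    ∀ ν : ℝ, 0 < ν → ν ≤ 1 / Lg → ν * ηl / 2 * ‖gv - fv‖ ^ 2 ≤ Γ - G := by
  intro ν hν hνL
  set d : EuclideanSpace ℝ (Fin N) := gv - fv with hd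
  have hηd : Differentiable ℝ η := hC2.differentiable (by norm_num)
  have hgradC : ContDiff ℝ 1 (gradient η) := by
    have h1 : ContDiff ℝ 1 (fderiv ℝ η) := hC2.fderiv_right (by norm_num)
    exact ((InnerProductSpace.toDual ℝ
      (EuclideanSpace ℝ (Fin N))).symm.toContinuousLinearMap.contDiff).comp h1
  have hgradD : Differentiable ℝ (gradient η) := hgradC.differentiable (by norm_num)
  -- the curve
  have hL : ∀ t : ℝ, HasDerivAt (fun t : ℝ => uK - t • d) (-d) t := by
    intro t
    have := ((hasDerivAt_id t).smul_const d).const_sub uK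
    simpa using this
  -- derivative of η along the curve
  have hφ : ∀ t : ℝ, HasDerivAt (fun t : ℝ => η (uK - t • d))
      (-⟪gradient η (uK - t • d), d⟫) t := by
    intro t
    have h1 := (hηd (uK - t • d)).hasGradientAt.hasFDerivAt.comp_hasDerivAt t (hL t)
    simpa [InnerProductSpace.toDual_apply_apply, inner_neg_right, Function.comp_def] using h1
  -- derivative of the gradient pairing along the curve
  have hχ : ∀ t : ℝ, HasDerivAt (fun t : ℝ => ⟪gradient η (uK - t • d), d⟫)
      (-⟪fderiv ℝ (gradient η) (uK - t • d) d, d⟫) t := by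
    intro t
    have h1 : HasDerivAt (fun t : ℝ => gradient η (uK - t • d))
        (fderiv ℝ (gradient η) (uK - t • d) (-d)) t :=
      by have h := (hgradD (uK - t • d)).hasFDerivAt.comp_hasDerivAt t (hL t); exact h
    have h2 := h1.inner ℝ (hasDerivAt_const t d)
    simpa [inner_neg_left, map_neg] using h2
  set c : ℝ := ‖d‖ ^ 2 with hc
  set I : Set ℝ := Set.Icc 0 (1 / Lg) with hI
  have hIint : interior I ⊆ I := interior_subset
  have hImem : ∀ t ∈ I, uK - t • d ∈ Ω := fun t ht => hmem t ht.1 ht.2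
  -- the shifted gradient pairing is antitone on I
  have hanti : AntitoneOn (fun t : ℝ => ⟪gradient η (uK - t • d), d⟫ + ηl * c * t) I := by
    apply antitoneOn_of_deriv_nonpos (convex_Icc _ _)
    · exact fun t _ => ((((hχ t).add
        ((hasDerivAt_id t).const_mul (ηl * c))).differentiableAt).continuousAt).continuousWithinAt
    · intro t _
      exact (((hχ t).add ((hasDerivAt_id t).const_mul (ηl * c))).differentiableAt).differentiableWithinAt
    · intro t ht
      have ht' : t ∈ I := hIint ht
      have hder : HasDerivAt (fun t : ℝ => ⟪gradient η (uK - t • d), d⟫ + ηl * c * t)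
          (-⟪fderiv ℝ (gradient η) (uK - t • d) d, d⟫ + ηl * c * 1) t :=
        (hχ t).add ((hasDerivAt_id t).const_mul (ηl * c))
      rw [hder.deriv]
      have hh := hHess _ (hImem t ht') d
      simp only [mul_one, hc]
      linarith [hh]
  -- the comparison function Ψ is monotone on I
  have hmono : MonotoneOn (fun t : ℝ =>
      η (uK - t • d) + t * ⟪gradient η uK, d⟫ - ηl * c * t ^ 2 / 2) I := by
    apply monotoneOn_of_deriv_nonneg (convex_Icc _ _)
    · intro t _
      have hΨ : HasDerivAt (fun t : ℝ =>
          η (uK - t • d) + t * ⟪gradient η uK, d⟫ - ηl * c * t ^ 2 / 2)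
          (-⟪gradient η (uK - t • d), d⟫ + ⟪gradient η uK, d⟫ - ηl * c * t) t := by
        have h1 := (hφ t).add ((hasDerivAt_id t).mul_const ⟪gradient η uK, d⟫)
        have h2 : HasDerivAt (fun t : ℝ => ηl * c * t ^ 2 / 2) (ηl * c * t) t := by
          have h3 : HasDerivAt (fun t : ℝ => t ^ 2) (2 * t) t := by
            simpa using hasDerivAt_pow 2 t
          have h4 := (h3.const_mul (ηl * c)).div_const 2
          exact h4.congr_deriv (by ring)
        simpa [one_mul, Pi.add_def, Pi.sub_def] using h1.sub h2
      exact hΨ.differentiableAt.continuousAt.continuousWithinAt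
    · intro t _
      have hΨ : HasDerivAt (fun t : ℝ =>
          η (uK - t • d) + t * ⟪gradient η uK, d⟫ - ηl * c * t ^ 2 / 2)
          (-⟪gradient η (uK - t • d), d⟫ + ⟪gradient η uK, d⟫ - ηl * c * t) t := by
        have h1 := (hφ t).add ((hasDerivAt_id t).mul_const ⟪gradient η uK, d⟫)
        have h2 : HasDerivAt (fun t : ℝ => ηl * c * t ^ 2 / 2) (ηl * c * t) t := by
          have h3 : HasDerivAt (fun t : ℝ => t ^ 2) (2 * t) t := by
            simpa using hasDerivAt_pow 2 t
          have h4 := (h3.const_mul (ηl * c)).div_const 2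
          exact h4.congr_deriv (by ring)
        simpa [one_mul, Pi.add_def, Pi.sub_def] using h1.sub h2
      exact hΨ.differentiableAt.differentiableWithinAt
    · intro t ht
      have ht' : t ∈ I := hIint ht
      have hΨ : HasDerivAt (fun t : ℝ =>
          η (uK - t • d) + t * ⟪gradient η uK, d⟫ - ηl * c * t ^ 2 / 2)
          (-⟪gradient η (uK - t • d), d⟫ + ⟪gradient η uK, d⟫ - ηl * c * t) t := by
        have h1 := (hφ t).add ((hasDerivAt_id t).mul_const ⟪gradient η uK, d⟫)
        have h2 : HasDerivAt (fun t : ℝ => ηl * c * t ^ 2 / 2) (ηl * c * t) t := by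
          have h3 : HasDerivAt (fun t : ℝ => t ^ 2) (2 * t) t := by
            simpa using hasDerivAt_pow 2 t
          have h4 := (h3.const_mul (ηl * c)).div_const 2
          exact h4.congr_deriv (by ring)
        simpa [one_mul, Pi.add_def, Pi.sub_def] using h1.sub h2
      rw [hΨ.deriv]
      have h0 : (0 : ℝ) ∈ I := ⟨le_refl 0, le_of_lt (by positivity)⟩
      have := hanti h0 ht' ht'.1
      simp only [zero_smul, sub_zero, mul_zero, add_zero] at this
      linarith
  -- apply monotonicity between 0 and ν
  have h0 : (0 : ℝ) ∈ I := ⟨le_refl 0, le_of_lt (by positivity)⟩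
  have hνI : ν ∈ I := ⟨le_of_lt hν, hνL⟩
  have hkey := hmono h0 hνI (le_of_lt hν)
  simp only [zero_smul, sub_zero, zero_mul, add_zero, zero_pow, mul_zero, zero_div] at hkey
  have hE := hent ν (le_of_lt hν) hνL
  -- hkey : η uK ≤ η (uK - ν•d) + ν * ⟪∇η uK, d⟫ - ηl*c*ν^2/2
  have hfinal : ηl * c * ν ^ 2 / 2 ≤ ν * (Γ - G) := by
    rw [hΓ]; nlinarith [hkey, hE]
  rw [hc] at hfinal
  nlinarith [hfinal, sq_nonneg ν, mul_pos hν hν]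
end

section
/- (Invariance of the admissible set.) Suppose Ω ⊆ ℝ^N is convex and the numerical flux g satisfies: for all states w_K, w_L with u_K, u_L ∈ Ω, all unit normals n, and all ν ≤ 1/L_g, the intermediate state 𝒰(w_K, w_L; n, ν) = u_K − ν(g(w_K,w_L;n) − f(w_K)·n) lies in Ω. Then under the CFL condition Δt ≤ min_K |K|/(L_g |∂K|), the finite volume scheme u_K^{n+1} = u_K^n − (Δt/|K|) Σ_L |e_{KL}| g(w_K^n, w_L^n; n_{KL}) preserves Ω: if u_K^0 ∈ Ω for all K, then u_K^n ∈ Ω for all K and all n ∈ ℕ. -/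
theorem stmt_8 {N d : ℕ} {𝒦 : Type*}
    (Ω : Set (EuclideanSpace ℝ (Fin N))) (hΩ : Convex ℝ Ω)
    (vol : 𝒦 → ℝ) (hvol : ∀ K, 0 < vol K)
    (𝒩 : 𝒦 → Finset 𝒦) (h𝒩 : ∀ K, (𝒩 K).Nonempty)
    (e : 𝒦 → 𝒦 → ℝ) (he : ∀ K L, L ∈ 𝒩 K → 0 < e K L)
    (pK : 𝒦 → ℝ) (hpK : ∀ K, pK K = ∑ L ∈ 𝒩 K, e K L)
    (nrm : 𝒦 → 𝒦 → EuclideanSpace ℝ (Fin d)) (hnrm : ∀ K L, ‖nrm K L‖ = 1)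
    (g : (EuclideanSpace ℝ (Fin N) × ℝ) → (EuclideanSpace ℝ (Fin N) × ℝ) →
      EuclideanSpace ℝ (Fin d) → EuclideanSpace ℝ (Fin N))
    (f : (EuclideanSpace ℝ (Fin N) × ℝ) → EuclideanSpace ℝ (Fin d) →
      EuclideanSpace ℝ (Fin N))
    (hclosed : ∀ (K : 𝒦) (w : EuclideanSpace ℝ (Fin N) × ℝ),
      ∑ L ∈ 𝒩 K, e K L • f w (nrm K L) = 0)
    (Lg : ℝ) (hLg : 0 < Lg)
    (hinv : ∀ (uK uL : EuclideanSpace ℝ (Fin N)) (αK αL : ℝ)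
      (n : EuclideanSpace ℝ (Fin d)) (ν : ℝ), uK ∈ Ω → uL ∈ Ω → ‖n‖ = 1 →
      0 ≤ ν → ν ≤ 1 / Lg →
      uK - ν • (g (uK, αK) (uL, αL) n - f (uK, αK) n) ∈ Ω)
    (Δt : ℝ) (hΔt : 0 < Δt)
    (hCFL : ∀ K, Δt * pK K ≤ vol K / Lg)
    (α : 𝒦 → ℝ) (u : ℕ → 𝒦 → EuclideanSpace ℝ (Fin N))
    (hscheme : ∀ n K, u (n + 1) K = u n K -
      (Δt / vol K) • ∑ L ∈ 𝒩 K, e K L • g (u n K, α K) (u n L, α L) (nrm K L))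
    (hinit : ∀ K, u 0 K ∈ Ω) :
    ∀ n K, u n K ∈ Ω := by
  intro n
  induction n with
  | zero => exact hinit
  | succ n ih =>
    intro K
    have hp : 0 < pK K := by
      rw [hpK]; exact Finset.sum_pos (fun L hL => he K L hL) (h𝒩 K)
    set ν : ℝ := Δt * pK K / vol K with hνdef
    have hν0 : 0 ≤ ν := div_nonneg (mul_nonneg hΔt.le hp.le) (hvol K).le
    have hν1 : ν ≤ 1 / Lg := by
      rw [hνdef, div_le_div_iff₀ (hvol K) hLg, one_mul]
      calc Δt * pK K * Lg ≤ vol K / Lg * Lg := by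
            exact mul_le_mul_of_nonneg_right (hCFL K) hLg.le
        _ = vol K := by field_simp
    have key : u (n+1) K = ∑ L ∈ 𝒩 K, (e K L / pK K) •
        (u n K - ν • (g (u n K, α K) (u n L, α L) (nrm K L)
          - f (u n K, α K) (nrm K L))) := by
      have expand : ∀ L, (e K L / pK K) •
          (u n K - ν • (g (u n K, α K) (u n L, α L) (nrm K L)
            - f (u n K, α K) (nrm K L)))
          = (e K L / pK K) • u n K
            - (Δt / vol K) • (e K L • g (u n K, α K) (u n L, α L) (nrm K L))
            + (ν / pK K) • (e K L • f (u n K, α K) (nrm K L)) := by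
        intro L
        rw [hνdef]
        match_scalars <;> field_simp [hp.ne', (hvol K).ne'] <;> ring
      rw [hscheme]
      simp only [expand]
      rw [Finset.sum_add_distrib, Finset.sum_sub_distrib, ← Finset.sum_smul,
        ← Finset.smul_sum, ← Finset.smul_sum, hclosed K, smul_zero, add_zero,
        ← Finset.sum_div, ← hpK, div_self hp.ne', one_smul]
    rw [key]
    refine hΩ.sum_mem (fun L hL => div_nonneg (he K L hL).le hp.le) ?_ (fun L hL => ?_)
    · rw [← Finset.sum_div, ← hpK, div_self hp.ne']
    · exact hinv _ _ _ _ _ _ (ih K) (ih L) (hnrm K L) hν0 hν1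
end

section
/- (Discrete cell entropy inequality.) Under the same setting, if additionally η is convex on Ω and for all ν ≤ 1/L_g the interface entropy inequality η(𝒰(w_K, w_L; n, ν), α_K) − η(w_K) + ν(G(w_K,w_L;n) − F(w_K)·n) ≤ 0 holds, and the normals satisfy Σ_L |e_{KL}| F(w_K)·n_{KL} = 0, then under the CFL condition Δt ≤ min_K |K|/(L_g|∂K|) the scheme satisfies η(w_K^{n+1}) ≤ η(w_K^n) − (Δt/|K|) Σ_{L∈𝒩(K)} |e_{KL}| G(w_K^n, w_L^n; n_{KL}). -/
theorem stmt_9 {N : ℕ} {ι : Type*} [Fintype ι] [Nonempty ι]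
    (Ω : Set (EuclideanSpace ℝ (Fin N))) (hΩ : Convex ℝ Ω)
    (η : EuclideanSpace ℝ (Fin N) → ℝ → ℝ) (αK : ℝ)
    (hconv : ConvexOn ℝ Ω (fun u => η u αK))
    (Lg vol Δt pK : ℝ) (hLg : 0 < Lg) (hvol : 0 < vol) (hΔt : 0 < Δt)
    (e : ι → ℝ) (he : ∀ i, 0 < e i) (hpK : pK = ∑ i, e i)
    (uK : EuclideanSpace ℝ (Fin N)) (huK : uK ∈ Ω)
    (gf ff : ι → EuclideanSpace ℝ (Fin N)) (Gf Ff : ι → ℝ)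
    (hfdiv : ∑ i, e i • ff i = 0) (hFdiv : ∑ i, e i * Ff i = 0)
    (hmem : ∀ (i : ι) (ν : ℝ), 0 ≤ ν → ν ≤ 1 / Lg → uK - ν • (gf i - ff i) ∈ Ω)
    (hent : ∀ (i : ι) (ν : ℝ), 0 ≤ ν → ν ≤ 1 / Lg →
      η (uK - ν • (gf i - ff i)) αK - η uK αK + ν * (Gf i - Ff i) ≤ 0)
    (hCFL : Δt * pK ≤ vol / Lg) :
    η (uK - (Δt / vol) • ∑ i, e i • gf i) αK
      ≤ η uK αK - (Δt / vol) * ∑ i, e i * Gf i := by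
  have hpK0 : 0 < pK := by
    rw [hpK]; exact Finset.sum_pos (fun i _ => he i) Finset.univ_nonempty
  set ν : ℝ := Δt * pK / vol with hν
  have hν0 : 0 ≤ ν := by positivity
  have hν1 : ν ≤ 1 / Lg := by
    rw [hν, div_le_div_iff₀ hvol hLg, one_mul]
    calc Δt * pK * Lg ≤ vol / Lg * Lg := by
          exact mul_le_mul_of_nonneg_right hCFL hLg.le
      _ = vol := by field_simp
  set w : ι → ℝ := fun i => e i / pK with hw
  have hw0 : ∀ i ∈ Finset.univ, (0:ℝ) ≤ w i := fun i _ => div_nonneg (he i).le hpK0.le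
  have hw1 : ∑ i, w i = 1 := by
    rw [hw]; simp only
    rw [← Finset.sum_div, ← hpK, div_self hpK0.ne']
  set z : ι → EuclideanSpace ℝ (Fin N) := fun i => uK - ν • (gf i - ff i) with hz
  have hzmem : ∀ i ∈ Finset.univ, z i ∈ Ω := fun i _ => hmem i ν hν0 hν1
  have hcomb : uK - (Δt / vol) • ∑ i, e i • gf i = ∑ i, w i • z i := by
    have : ∑ i, w i • z i
        = (∑ i, w i) • uK - (ν / pK) • ∑ i, e i • gf i
          + (ν / pK) • ∑ i, e i • ff i := by
      rw [Finset.sum_smul, Finset.smul_sum, Finset.smul_sum, hz, hw]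
      simp only
      rw [← Finset.sum_sub_distrib, ← Finset.sum_add_distrib]
      refine Finset.sum_congr rfl fun i _ => ?_
      module
    rw [this, hw1, one_smul, hfdiv, smul_zero, add_zero]
    congr 2
    rw [hν]
    field_simp
  rw [hcomb]
  have hJ := hconv.map_sum_le hw0 hw1 hzmem
  simp only [smul_eq_mul] at hJ
  refine hJ.trans ?_
  have hbound : ∀ i, η (z i) αK ≤ η uK αK - ν * (Gf i - Ff i) := fun i => by
    have := hent i ν hν0 hν1
    linarith
  calc ∑ i, w i * η (z i) αK
      ≤ ∑ i, w i * (η uK αK - ν * (Gf i - Ff i)) := by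
        refine Finset.sum_le_sum fun i _ => ?_
        exact mul_le_mul_of_nonneg_left (hbound i) (hw0 i (Finset.mem_univ i))
    _ = (∑ i, w i) * η uK αK - (ν / pK) * ∑ i, e i * Gf i
          + (ν / pK) * ∑ i, e i * Ff i := by
        rw [Finset.sum_mul, Finset.mul_sum, Finset.mul_sum,
          ← Finset.sum_sub_distrib, ← Finset.sum_add_distrib]
        refine Finset.sum_congr rfl fun i _ => ?_
        rw [hw]; simp only; field_simp; ring
    _ = η uK αK - (Δt / vol) * ∑ i, e i * Gf i := by
        rw [hw1, one_mul, hFdiv, mul_zero, add_zero, hν]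
        congr 2
        field_simp
end

section
/- (Relative-entropy inequality for the scheme, Theorem 5 core computation.) With H₀ ∈ ℝ^N fixed and states v_K satisfying ∇_u η(v_K, α_K) = H₀ for all K, the relative entropy h(u,v,α) = η(u,α) − η(v,α) − ⟪∇_u η(v,α), u − v⟫ satisfies, for the finite volume scheme and with G_{H₀}(w_K,w_L;n) := G(w_K,w_L;n) − ⟪H₀, g(w_K,w_L;n)⟫: h(u_K^{n+1}, v_K, α_K) − h(u_K^n, v_K, α_K) + (Δt/|K|) Σ_L |e_{KL}| G_{H₀}(w_K^n, w_L^n; n_{KL}) ≤ D_K^n, whenever the discrete entropy inequality η(w_K^{n+1}) − η(w_K^n) + (Δt/|K|) Σ_L |e_{KL}| G(w_K^n,w_L^n;n_{KL}) ≤ D_K^n holds. -/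
open RealInnerProductSpace

theorem stmt_11 {N : ℕ} {ι : Type*} [Fintype ι]
    (η : EuclideanSpace ℝ (Fin N) → ℝ → ℝ) (αK : ℝ)
    (vK H₀ : EuclideanSpace ℝ (Fin N))
    (hgrad : gradient (fun u => η u αK) vK = H₀)
    (hrel : EuclideanSpace ℝ (Fin N) → ℝ)
    (hhdef : ∀ u, hrel u = η u αK - η vK αK - ⟪H₀, u - vK⟫)
    (vol Δt : ℝ) (hvol : 0 < vol) (hΔt : 0 < Δt)
    (e : ι → ℝ) (gf : ι → EuclideanSpace ℝ (Fin N)) (Gf : ι → ℝ)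
    (uK uK1 : EuclideanSpace ℝ (Fin N)) (DK : ℝ)
    (hscheme : uK1 = uK - (Δt / vol) • ∑ i, e i • gf i)
    (hdei : η uK1 αK - η uK αK + (Δt / vol) * ∑ i, e i * Gf i ≤ DK)
    (GH : ι → ℝ) (hGH : ∀ i, GH i = Gf i - ⟪H₀, gf i⟫) :
    hrel uK1 - hrel uK + (Δt / vol) * ∑ i, e i * GH i ≤ DK := by
  have key : hrel uK1 - hrel uK + (Δt / vol) * ∑ i, e i * GH i
      = η uK1 αK - η uK αK + (Δt / vol) * ∑ i, e i * Gf i := by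
    have h1 : ⟪H₀, uK1 - vK⟫ - ⟪H₀, uK - vK⟫ = ⟪H₀, uK1 - uK⟫ := by
      rw [← inner_sub_right, sub_sub_sub_cancel_right]
    have h2 : ⟪H₀, uK1 - uK⟫ = -((Δt / vol) * ∑ i, e i * ⟪H₀, gf i⟫) := by
      rw [hscheme]
      simp only [sub_sub_cancel_left, inner_neg_right, inner_smul_right, inner_sum,
        real_inner_smul_right]
    simp only [hhdef, hGH, mul_sub, Finset.sum_sub_distrib, mul_sub]
    have := h1
    rw [h2] at this
    linarith [this]
  linarith [key, hdei]
end

section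
/- (Smooth relative-entropy identity.) Let α ∈ C¹(ℝ^d), u a C¹ solution of ∂_t u + div_x f(u,α) + Σᵢ sᵢ(u,α) ∂ᵢα = 0, and v a time-independent C¹ function with ∇_u η(v(x), α(x)) = H₀ constant and ⟪H₀, sᵢ(w)⟫ = 0 for all i and all states w. Assume (η, F) is an entropy pair (satisfying ∂_u η ∂_u fᵢ = ∂_u Fᵢ and ∂_u η (∂_α fᵢ + sᵢ) = ∂_α Fᵢ). Then the relative entropy h(u,v,α) = η(u,α) − η(v,α) − ⟪∇_u η(v,α), u−v⟫ satisfies the conservation law ∂_t h(u,v,α) + div_x ( F(u,α) − ⟪H₀, f(u,α)⟫ ) = 0. -/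
open RealInnerProductSpace

section helpers
variable {E Y X : Type*} [NormedAddCommGroup E] [NormedSpace ℝ E]
  [NormedAddCommGroup Y] [NormedSpace ℝ Y] [NormedAddCommGroup X] [NormedSpace ℝ X]

lemma aux_fst (g : E × ℝ → X) {w : E} {a : ℝ} (hg : DifferentiableAt ℝ g (w, a)) (h : E) :
    fderiv ℝ (fun w' => g (w', a)) w h = fderiv ℝ g (w, a) (h, 0) := by
  have H : HasFDerivAt (fun w' => g (w', a))
      ((fderiv ℝ g (w, a)).comp (ContinuousLinearMap.inl ℝ E ℝ)) w :=
    hg.hasFDerivAt.comp w (hasFDerivAt_prodMk_left w a)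
  rw [H.fderiv]; rfl

lemma aux_snd (g : E × ℝ → X) {w : E} {a : ℝ} (hg : DifferentiableAt ℝ g (w, a)) :
    deriv (fun a' => g (w, a')) a = fderiv ℝ g (w, a) (0, 1) := by
  have H : HasFDerivAt (fun a' => g (w, a'))
      ((fderiv ℝ g (w, a)).comp (ContinuousLinearMap.inr ℝ E ℝ)) a :=
    hg.hasFDerivAt.comp a (hasFDerivAt_prodMk_right w a)
  rw [H.hasDerivAt.deriv]; rfl

lemma aux_chain (g : E × ℝ → X) {φ : Y → E} {ψ : Y → ℝ} {x : Y}
    (hg : DifferentiableAt ℝ g (φ x, ψ x)) (hφ : DifferentiableAt ℝ φ x)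
    (hψ : DifferentiableAt ℝ ψ x) (h : Y) :
    fderiv ℝ (fun y => g (φ y, ψ y)) x h
      = fderiv ℝ (fun w' => g (w', ψ x)) (φ x) (fderiv ℝ φ x h)
        + (fderiv ℝ ψ x h) • deriv (fun a' => g (φ x, a')) (ψ x) := by
  have Hp : HasFDerivAt (fun y => (φ y, ψ y)) ((fderiv ℝ φ x).prod (fderiv ℝ ψ x)) x :=
    hφ.hasFDerivAt.prodMk hψ.hasFDerivAt
  have H : fderiv ℝ (fun y => g (φ y, ψ y)) x
      = (fderiv ℝ g (φ x, ψ x)).comp ((fderiv ℝ φ x).prod (fderiv ℝ ψ x)) :=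
    (hg.hasFDerivAt.comp x Hp).fderiv
  rw [H, aux_fst g hg, aux_snd g hg]
  have key : ((fderiv ℝ φ x h, fderiv ℝ ψ x h) : E × ℝ)
      = (fderiv ℝ φ x h, (0:ℝ)) + (fderiv ℝ ψ x h) • ((0 : E), (1:ℝ)) := by
    simp [Prod.ext_iff]
  simp only [ContinuousLinearMap.comp_apply, ContinuousLinearMap.prod_apply]
  rw [key, map_add, map_smul]

lemma aux_chain_t (g : E × ℝ → X) {φ : ℝ → E} {a : ℝ} {t : ℝ} {U : E}
    (hg : DifferentiableAt ℝ g (φ t, a)) (hφ : HasDerivAt φ U t) :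
    HasDerivAt (fun τ => g (φ τ, a)) (fderiv ℝ (fun w' => g (w', a)) (φ t) U) t := by
  have Hp : HasDerivAt (fun τ => ((φ τ, a) : E × ℝ)) ((U, 0) : E × ℝ) t :=
    hφ.prodMk (hasDerivAt_const t a)
  have := hg.hasFDerivAt.comp_hasDerivAt t Hp
  rwa [aux_fst g hg U]

lemma aux_grad {E : Type*} [NormedAddCommGroup E] [InnerProductSpace ℝ E] [CompleteSpace E]
    (φ : E → ℝ) (w y : E) : ⟪gradient φ w, y⟫ = fderiv ℝ φ w y := by
  simp [gradient, InnerProductSpace.toDual_symm_apply]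

end helpers
theorem stmt_17 {N d : ℕ}
    (α : EuclideanSpace ℝ (Fin d) → ℝ) (hα : ContDiff ℝ 1 α)
    (u : ℝ → EuclideanSpace ℝ (Fin d) → EuclideanSpace ℝ (Fin N))
    (hu : ContDiff ℝ 1 (fun p : ℝ × EuclideanSpace ℝ (Fin d) => u p.1 p.2))
    (v : EuclideanSpace ℝ (Fin d) → EuclideanSpace ℝ (Fin N)) (hv : ContDiff ℝ 1 v)
    (f s : Fin d → EuclideanSpace ℝ (Fin N) → ℝ → EuclideanSpace ℝ (Fin N))
    (hf : ∀ i, ContDiff ℝ 1 (fun p : EuclideanSpace ℝ (Fin N) × ℝ => f i p.1 p.2))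
    (hs : ∀ i, ContDiff ℝ 1 (fun p : EuclideanSpace ℝ (Fin N) × ℝ => s i p.1 p.2))
    (η : EuclideanSpace ℝ (Fin N) → ℝ → ℝ)
    (hη : ContDiff ℝ 2 (fun p : EuclideanSpace ℝ (Fin N) × ℝ => η p.1 p.2))
    (F : Fin d → EuclideanSpace ℝ (Fin N) → ℝ → ℝ)
    (hF : ∀ i, ContDiff ℝ 1 (fun p : EuclideanSpace ℝ (Fin N) × ℝ => F i p.1 p.2))
    (hcompat1 : ∀ (i : Fin d) (w : EuclideanSpace ℝ (Fin N)) (a : ℝ)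
      (x : EuclideanSpace ℝ (Fin N)),
      fderiv ℝ (fun w' => F i w' a) w x
        = ⟪gradient (fun w' => η w' a) w, fderiv ℝ (fun w' => f i w' a) w x⟫)
    (hcompat2 : ∀ (i : Fin d) (w : EuclideanSpace ℝ (Fin N)) (a : ℝ),
      deriv (fun a' => F i w a') a
        = ⟪gradient (fun w' => η w' a) w,
            deriv (fun a' => f i w a') a + s i w a⟫)
    (hPDE : ∀ (t : ℝ) (x : EuclideanSpace ℝ (Fin d)),
      deriv (fun τ => u τ x) t
        + ∑ i, fderiv ℝ (fun y => f i (u t y) (α y)) x (EuclideanSpace.single i 1)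
        + ∑ i, (fderiv ℝ α x (EuclideanSpace.single i 1)) • s i (u t x) (α x) = 0)
    (H₀ : EuclideanSpace ℝ (Fin N))
    (hS1 : ∀ x, gradient (fun w => η w (α x)) (v x) = H₀)
    (hS2 : ∀ (i : Fin d) (w : EuclideanSpace ℝ (Fin N)) (a : ℝ), ⟪H₀, s i w a⟫ = 0) :
    ∀ (t : ℝ) (x : EuclideanSpace ℝ (Fin d)),
      deriv (fun τ => η (u τ x) (α x) - η (v x) (α x) - ⟪H₀, u τ x - v x⟫) t
        + ∑ i, fderiv ℝ
            (fun y => F i (u t y) (α y) - ⟪H₀, f i (u t y) (α y)⟫) x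
            (EuclideanSpace.single i 1) = 0 := by
  intro t x
  set w : EuclideanSpace ℝ (Fin N) := u t x with hw

  set a : ℝ := α x with ha
  set U : EuclideanSpace ℝ (Fin N) := deriv (fun τ => u τ x) t with hU
  set G : EuclideanSpace ℝ (Fin N) := gradient (fun w' => η w' a) w with hG
  -- differentiability facts
  have hηd : Differentiable ℝ (fun p : EuclideanSpace ℝ (Fin N) × ℝ => η p.1 p.2) :=
    hη.differentiable (by norm_num)
  have hud : Differentiable ℝ (fun p : ℝ × EuclideanSpace ℝ (Fin d) => u p.1 p.2) := hu.differentiable one_ne_zero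
  have hux : DifferentiableAt ℝ (fun y => u t y) x :=
    (hud (t, x)).comp x ((differentiableAt_const t).prodMk differentiableAt_id)
  have hαx : DifferentiableAt ℝ α x := (hα.differentiable one_ne_zero) x
  have huτ : HasDerivAt (fun τ => u τ x) U t := by
    have : DifferentiableAt ℝ (fun τ => u τ x) t :=
      (hud (t, x)).comp (g := fun p : ℝ × EuclideanSpace ℝ (Fin d) => u p.1 p.2) (f := fun τ : ℝ => (τ, x)) t (differentiableAt_id.prodMk (differentiableAt_const x))
    exact this.hasDerivAt
  -- time derivative
  have hTη : HasDerivAt (fun τ => η (u τ x) a) (⟪G, U⟫) t := by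
    have h1 := aux_chain_t (fun p : EuclideanSpace ℝ (Fin N) × ℝ => η p.1 p.2) (hηd (w, a)) huτ
    rwa [← aux_grad (fun w' => η w' a) w U] at h1
  have hTinner : HasDerivAt (fun τ => ⟪H₀, u τ x - v x⟫) (⟪H₀, U⟫) t := by
    have h1 : HasDerivAt (fun τ => u τ x - v x) U t := huτ.sub_const (v x)
    have h2 := (innerSL ℝ H₀).hasFDerivAt.comp_hasDerivAt t h1
    simpa [Function.comp_def] using h2
  have hT : deriv (fun τ => η (u τ x) a - η (v x) a - ⟪H₀, u τ x - v x⟫) t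
      = ⟪G, U⟫ - ⟪H₀, U⟫ := ((hTη.sub_const (η (v x) a)).sub hTinner).deriv
  -- spatial derivatives
  set e : Fin d → EuclideanSpace ℝ (Fin d) := fun i => EuclideanSpace.single i 1 with he
  set Du : Fin d → EuclideanSpace ℝ (Fin N) := fun i => fderiv ℝ (fun y => u t y) x (e i) with hDu
  set A : Fin d → ℝ := fun i => fderiv ℝ α x (e i) with hA
  set Dfw : Fin d → EuclideanSpace ℝ (Fin N) := fun i => fderiv ℝ (fun w' => f i w' a) w (Du i) with hDfw
  set dfa : Fin d → EuclideanSpace ℝ (Fin N) := fun i => deriv (fun a' => f i w a') a with hdfa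
  have hfd : ∀ i, fderiv ℝ (fun y => f i (u t y) (α y)) x (e i) = Dfw i + A i • dfa i :=
    fun i => aux_chain (fun p : EuclideanSpace ℝ (Fin N) × ℝ => f i p.1 p.2)
      ((hf i).differentiable one_ne_zero (w, a)) hux hαx (e i)
  have hfdiffy : ∀ i, DifferentiableAt ℝ (fun y => f i (u t y) (α y)) x := fun i =>
    ((hf i).differentiable one_ne_zero (w, a)).comp (g := fun p : EuclideanSpace ℝ (Fin N) × ℝ => f i p.1 p.2) x (hux.prodMk hαx)
  have hFdiffy : ∀ i, DifferentiableAt ℝ (fun y => F i (u t y) (α y)) x := fun i =>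
    ((hF i).differentiable one_ne_zero (w, a)).comp (g := fun p : EuclideanSpace ℝ (Fin N) × ℝ => F i p.1 p.2) x (hux.prodMk hαx)
  have hIdiffy : ∀ i, DifferentiableAt ℝ (fun y => ⟪H₀, f i (u t y) (α y)⟫) x := fun i =>
    ((innerSL ℝ H₀).differentiableAt).comp x (hfdiffy i)
  have hFd : ∀ i, fderiv ℝ (fun y => F i (u t y) (α y)) x (e i)
      = ⟪G, Dfw i⟫ + A i * ⟪G, dfa i + s i w a⟫ := by
    intro i
    have h1 := aux_chain (fun p : EuclideanSpace ℝ (Fin N) × ℝ => F i p.1 p.2)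
      ((hF i).differentiable one_ne_zero (w, a)) hux hαx (e i)
    rw [h1, hcompat1 i w a, hcompat2 i w a]
    rfl
  have hId : ∀ i, fderiv ℝ (fun y => ⟪H₀, f i (u t y) (α y)⟫) x (e i)
      = ⟪H₀, Dfw i + A i • dfa i⟫ := by
    intro i
    have h1 : fderiv ℝ (fun y => ⟪H₀, f i (u t y) (α y)⟫) x
        = (innerSL ℝ H₀).comp (fderiv ℝ (fun y => f i (u t y) (α y)) x) :=
      ((innerSL ℝ H₀).hasFDerivAt.comp x (hfdiffy i).hasFDerivAt).fderiv
    rw [h1]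
    simp only [ContinuousLinearMap.comp_apply, hfd i]
    simp
  -- sum of fluxes from the PDE
  have hQ : (∑ i, (Dfw i + A i • dfa i + A i • s i w a)) = -U := by
    have h := hPDE t x
    simp only [← he, ← hw, ← ha, ← hU, hfd] at h
    have h2 : (∑ i, (Dfw i + A i • dfa i + A i • s i w a))
        = (U + ∑ i, (Dfw i + A i • dfa i) + ∑ i, A i • s i w a) - U := by
      rw [Finset.sum_add_distrib]; abel
    rw [h2, show U + ∑ i, (Dfw i + A i • dfa i) + ∑ i, A i • s i w a = 0 from by simpa only [show ∀ i, fderiv ℝ (fun y => f i (u t y) (α y)) x (EuclideanSpace.single i 1) = Dfw i + A i • dfa i from hfd] using h, zero_sub]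
  -- put everything together
  have hgoal : ∀ i, fderiv ℝ
      (fun y => F i (u t y) (α y) - ⟪H₀, f i (u t y) (α y)⟫) x (e i)
      = ⟪G, Dfw i + A i • dfa i + A i • s i w a⟫
        - ⟪H₀, Dfw i + A i • dfa i + A i • s i w a⟫ := by
    intro i
    rw [fderiv_fun_sub (hFdiffy i) (hIdiffy i)]
    simp only [ContinuousLinearMap.sub_apply, hFd i, hId i]
    simp only [inner_add_right, real_inner_smul_right, hS2]
    ring
  rw [hT]
  rw [Finset.sum_congr rfl (fun i _ => (hgoal i : fderiv ℝ (fun y => F i (u t y) (α y) - ⟪H₀, f i (u t y) (α y)⟫) x (EuclideanSpace.single i 1) = _))]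
  rw [Finset.sum_sub_distrib, ← inner_sum, ← inner_sum, hQ]
  simp only [inner_neg_right]
  ring
end
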